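/- Let ℓ ∈ ℕ and ν ∈ ℝ. For every integer n > ℓ, the series Σ_{m=2ℓ}^∞ C(ν,m)·X_m^{(ℓ)}·n^{ν−m} converges and its sum equals Σ_{j=−ℓ}^{ℓ} C(2ℓ, ℓ+j)·(−1)^j·(n+j)^ν, i.e. the value at n of (−Δ)^ℓ applied to the sequence k ↦ k^ν. If ν > 0, the same convergence and equality hold also for n = ℓ. -/

import Mathlib

noncomputable section

open scoped ENNReal

namespace HRB

/-- discrete gradient `(∇u)_n = u_n - u_{n-1}` -/
def grad (u : ℤ → ℂ) : ℤ → ℂ := fun n => u n - u (n - 1)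

/-- discrete divergence (forward difference) `(∂u)_n = u_{n+1} - u_n` -/
def fdiff (u : ℤ → ℂ) : ℤ → ℂ := fun n => u (n + 1) - u n

/-- averaging operator `(Mu)_n = (u_n + u_{n+1})/2` -/
def avg (u : ℤ → ℂ) : ℤ → ℂ := fun n => (u n + u (n + 1)) / 2

/-- negative discrete Laplacian `((-Δ)u)_n = 2u_n - u_{n-1} - u_{n+1}` -/
def negLap (u : ℤ → ℂ) : ℤ → ℂ := fun n => 2 * u n - u (n - 1) - u (n + 1)

/-- `(-Δ)^{ℓ/2}`: equal to `(-Δ)^m` if `ℓ = 2m` and to `∇ ∘ (-Δ)^m` if `ℓ = 2m+1`. -/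
def halfPow (l : ℕ) (u : ℤ → ℂ) : ℤ → ℂ :=
  if l % 2 = 0 then negLap^[l / 2] u else grad (negLap^[l / 2] u)

def gradR (u : ℤ → ℝ) : ℤ → ℝ := fun n => u n - u (n - 1)

def fdiffR (u : ℤ → ℝ) : ℤ → ℝ := fun n => u (n + 1) - u n

def negLapR (u : ℤ → ℝ) : ℤ → ℝ := fun n => 2 * u n - u (n - 1) - u (n + 1)

/-- `u ∈ H^ℓ` -/
def memH (l : ℤ) (u : ℤ → ℂ) : Prop := ∀ n : ℤ, n < l → u n = 0

/-- `u ∈ 𝓗₀^ℓ`: compactly supported elements of `H^ℓ` -/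
def memH0 (l : ℤ) (u : ℤ → ℂ) : Prop :=
  memH l u ∧ ∃ N : ℤ, ∀ n : ℤ, N ≤ n → u n = 0

/-- real-valued sequences in `H^ℓ` -/
def memHR (l : ℤ) (g : ℤ → ℝ) : Prop := ∀ n : ℤ, n < l → g n = 0

/-- `Σ_{n=a}^∞ f(n)` (as an unordered real `tsum`) -/
def qsum (a : ℤ) (f : ℤ → ℝ) : ℝ := ∑' n : ℤ, if a ≤ n then f n else 0

/-- `Σ_{n=a}^∞ f(n)` as a sum in `ℝ≥0∞` (for nonnegative `f`) -/
def esum (a : ℤ) (f : ℤ → ℝ) : ℝ≥0∞ :=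
  ∑' n : ℤ, if a ≤ n then ENNReal.ofReal (f n) else 0

/-- `⌈ℓ/2⌉` -/
def ceilHalf (l : ℕ) : ℤ := (((l + 1) / 2 : ℕ) : ℤ)

/-- `Σ_{n=⌈ℓ/2⌉}^∞ |((-Δ)^{ℓ/2}u)_n|²` -/
def energy (l : ℕ) (u : ℤ → ℂ) : ℝ :=
  qsum (ceilHalf l) fun n => ‖halfPow l u n‖ ^ 2

def eenergy (l : ℕ) (u : ℤ → ℂ) : ℝ≥0∞ :=
  esum (ceilHalf l) fun n => ‖halfPow l u n‖ ^ 2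

/-- `Σ_{n=l}^∞ ρ_n |u_n|²` -/
def wsum (l : ℤ) (ρ : ℤ → ℝ) (u : ℤ → ℂ) : ℝ := qsum l fun n => ρ n * ‖u n‖ ^ 2

def ewsum (l : ℤ) (ρ : ℤ → ℝ) (u : ℤ → ℂ) : ℝ≥0∞ := esum l fun n => ρ n * ‖u n‖ ^ 2

/-- Assumption (A1) -/
def A1 (l : ℕ) (g : ℤ → ℝ) : Prop :=
  memHR l g ∧ ∀ k : ℕ, k < l → ∀ n : ℤ, (l : ℤ) - (k : ℤ) ≤ n → 0 < fdiffR^[k] g n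

/-- Assumption (A2) -/
def A2 (l : ℕ) (g : ℤ → ℝ) : Prop :=
  ∀ k : ℕ, 1 ≤ k → k < l → ∀ n : ℤ, (l : ℤ) + 1 - (k : ℤ) ≤ n →
    0 ≤ negLapR^[l - k] (fdiffR^[k] g) n

/-- Assumption (A2') -/
def A2' (l : ℕ) (g : ℤ → ℝ) : Prop := ∀ n : ℤ, (l : ℤ) ≤ n → 0 ≤ negLapR^[l] g n

/-- Asymptotic expansion (Exp_s):
`g_n = Σ_{j=0}^{2ℓ} α_j n^{ℓ-j-s} + O(n^{-ℓ-1-s})` as `n → ∞`, with `α_0 ≠ 0`. -/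
def ExpS (l : ℕ) (g : ℤ → ℝ) (s : ℝ) : Prop :=
  ∃ α : ℕ → ℝ, α 0 ≠ 0 ∧ ∃ C : ℝ, ∃ N : ℤ, ∀ n : ℤ, N ≤ n →
    |g n - ∑ j ∈ Finset.range (2 * l + 1), α j * (n : ℝ) ^ ((l : ℝ) - (j : ℝ) - s)| ≤
      C * (n : ℝ) ^ (-(l : ℝ) - 1 - s)

/-- the weight `ρ(g)_n = ((-Δ)^ℓ g)_n / g_n` -/
def rho (l : ℕ) (g : ℤ → ℝ) : ℤ → ℝ := fun n => negLapR^[l] g n / g n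

/-- the `n`-th term of the remainder `𝓡_k^{(ℓ)}(g;u)` -/
def remTerm (l k : ℕ) (g : ℤ → ℝ) (u : ℤ → ℂ) : ℤ → ℝ := fun n =>
  (if k + 1 = l then 1
    else negLapR^[l - 1 - k] (fdiffR^[k + 1] g) n / fdiffR^[k + 1] g n) *
  ‖(Real.sqrt (fdiffR^[k] g n / fdiffR^[k] g (n + 1)) : ℂ) * fdiff^[k] u (n + 1) -
    (Real.sqrt (fdiffR^[k] g (n + 1) / fdiffR^[k] g n) : ℂ) * fdiff^[k] u n‖ ^ 2

/-- the remainder `𝓡_k^{(ℓ)}(g;u)` -/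
def rem (l k : ℕ) (g : ℤ → ℝ) (u : ℤ → ℂ) : ℝ :=
  qsum ((l : ℤ) - (k : ℤ)) (remTerm l k g u)

def erem (l k : ℕ) (g : ℤ → ℝ) (u : ℤ → ℂ) : ℝ≥0∞ :=
  esum ((l : ℤ) - (k : ℤ)) (remTerm l k g u)

/-- `ρ` is a discrete Hardy–Rellich–Birman weight for the power `ℓ` -/
def IsHRBWeight (l : ℕ) (ρ : ℤ → ℝ) : Prop :=
  (∀ n : ℤ, (l : ℤ) ≤ n → 0 ≤ ρ n) ∧
  ∀ u : ℤ → ℂ, memH0 l u → wsum l ρ u ≤ energy l u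

/-- criticality of the weight `ρ` -/
def IsCritical (l : ℕ) (ρ : ℤ → ℝ) : Prop :=
  ∀ ρ' : ℤ → ℝ, (∀ n : ℤ, (l : ℤ) ≤ n → 0 ≤ ρ' n) →
    (∀ u : ℤ → ℂ, memH0 l u → wsum l ρ' u ≤ energy l u) →
    (∀ n : ℤ, (l : ℤ) ≤ n → ρ n ≤ ρ' n) →
    ∀ n : ℤ, (l : ℤ) ≤ n → ρ' n = ρ n

/-- optimality near infinity of the weight `ρ` -/
def IsOptNearInfinity (l : ℕ) (ρ : ℤ → ℝ) : Prop :=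
  ∀ M : ℤ, (l : ℤ) ≤ M → ∀ ε : ℝ, 0 < ε →
    ∃ u : ℤ → ℂ, memH0 M u ∧ energy l u < (1 + ε) * wsum l ρ u

/-- non-attainability of the weight `ρ` -/
def IsNonAttainable (l : ℕ) (ρ : ℤ → ℝ) : Prop :=
  ∀ u : ℤ → ℂ, memH l u → ewsum l ρ u ≠ ⊤ → eenergy l u = ewsum l ρ u →
    u = 0

/-- `g^{(ℓ)}_n = √n ∏_{j=1}^{ℓ-1} (n-j)` for `n ≥ 0`, zero for `n < 0` -/
def gseq (l : ℕ) : ℤ → ℝ := fun n =>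
  if n < 0 then 0 else Real.sqrt (n : ℝ) * ∏ j ∈ Finset.Icc 1 (l - 1), ((n : ℝ) - (j : ℝ))

/-- the optimal weight `ρ^{(ℓ)}` -/
def rhoSeq (l : ℕ) : ℤ → ℝ := rho l (gseq l)

/-- `g^{(ℓ)}(q)_n = n^q ∏_{j=1}^{ℓ-1}(n-j)` for `n ≥ 0`, zero for `n < 0` -/
def gq (l : ℕ) (q : ℝ) : ℤ → ℝ := fun n =>
  if n < 0 then 0 else (n : ℝ) ^ q * ∏ j ∈ Finset.Icc 1 (l - 1), ((n : ℝ) - (j : ℝ))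

/-- `h_n = n^{ℓ-1/2}` for `n ≥ 0`, zero for `n < 0` -/
def hseq (l : ℕ) : ℤ → ℝ := fun n =>
  if n < 0 then 0 else (n : ℝ) ^ ((l : ℝ) - 1 / 2)

/-- generalized binomial coefficient `C(ν,m) = ν(ν-1)⋯(ν-m+1)/m!` -/
def genBinom (ν : ℝ) (m : ℕ) : ℝ := (∏ i ∈ Finset.range m, (ν - (i : ℝ))) / (m.factorial : ℝ)

/-- (signed) Stirling numbers of the first kind `s(n,k)`, extended by `0` for `k ≤ 0` -/
def stirling1 (n : ℕ) (k : ℤ) : ℝ :=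
  if k ≤ 0 then 0
  else (-1 : ℝ) ^ (n + k.toNat) *
    ∑ t ∈ (Finset.Icc 1 (n - 1)).powersetCard (n - k.toNat), ∏ i ∈ t, (i : ℝ)

/-- `X_m^{(ℓ)} = Σ_{j=-ℓ}^{ℓ} C(2ℓ,ℓ+j)(-1)^j j^m`, with `X_0^{(ℓ)} = 0` -/
def Xcoef (l m : ℕ) : ℝ :=
  if m = 0 then 0
  else ∑ j ∈ Finset.Icc (-(l : ℤ)) (l : ℤ),
    (((2 * l).choose ((l : ℤ) + j).toNat : ℕ) : ℝ) * (-1 : ℝ) ^ j * ((j : ℝ)) ^ m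

/-- the coefficients `r_k^{(ℓ)}` -/
def rcoef (l k : ℕ) : ℝ :=
  ∑ m ∈ Finset.Icc (2 * l) k,
    genBinom ((l : ℝ) + (m : ℝ) - (k : ℝ) - 1 / 2) m * stirling1 l ((l : ℤ) + (m : ℤ) - (k : ℤ)) *
      Xcoef l m

/-- Pochhammer symbol `(x)_ℓ = x(x+1)⋯(x+ℓ-1)` -/
def poch (x : ℝ) (l : ℕ) : ℝ := ∏ i ∈ Finset.range l, (x + (i : ℝ))



section Statement16Aux
open Set Filter Topology

lemma genBinom_zero (ν : ℝ) : genBinom ν 0 = 1 := by simp [genBinom]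

lemma genBinom_rec (ν : ℝ) (m : ℕ) :
    genBinom ν (m + 1) * ((m : ℝ) + 1) = genBinom ν m * (ν - m) := by
  have h1 : (m.factorial : ℝ) ≠ 0 := Nat.cast_ne_zero.mpr m.factorial_ne_zero
  have h2 : ((m + 1).factorial : ℝ) ≠ 0 := Nat.cast_ne_zero.mpr (m+1).factorial_ne_zero
  rw [genBinom, genBinom, Finset.prod_range_succ]
  rw [Nat.factorial_succ]
  push_cast
  field_simp

lemma abs_genBinom_rec (ν : ℝ) (m : ℕ) :
    |genBinom ν (m + 1)| * ((m : ℝ) + 1) = |genBinom ν m| * |ν - m| := by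
  have := congrArg abs (genBinom_rec ν m)
  rwa [abs_mul, abs_mul, abs_of_pos (by positivity : (0:ℝ) < (m:ℝ)+1)] at this

lemma arith (ν q : ℝ) (h0 : 0 ≤ q) (h1 : q < 1) :
    ∃ N : ℕ, ∀ m : ℕ, N ≤ m → |ν - m| * q ≤ (1 + q) / 2 * m := by
  refine ⟨⌈2 * |ν| / (1 - q)⌉₊, fun m hm => ?_⟩
  have hm' : 2 * |ν| / (1 - q) ≤ (m : ℝ) := le_trans (Nat.le_ceil _) (by exact_mod_cast hm)
  have h2 : 2 * |ν| ≤ (m : ℝ) * (1 - q) := by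
    rw [div_le_iff₀ (by linarith)] at hm'; linarith
  have h3 : |ν - m| ≤ |ν| + m := (abs_sub _ _).trans (by simp)
  nlinarith [abs_nonneg ν, abs_nonneg (ν - (m:ℝ)), Nat.cast_nonneg (α := ℝ) m]

lemma summable_term (ν t : ℝ) (ht : |t| < 1) :
    Summable (fun m => genBinom ν m * t ^ m) := by
  have h0 : (0:ℝ) ≤ |t| := abs_nonneg t
  obtain ⟨N, hN⟩ := arith ν |t| h0 ht
  refine summable_of_ratio_norm_eventually_le (r := (1 + |t|) / 2) (by linarith) ?_
  filter_upwards [Filter.eventually_ge_atTop N] with m hm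
  have key := abs_genBinom_rec ν m
  have harith := hN m hm
  have hm1 : (0:ℝ) < (m:ℝ) + 1 := by positivity
  rw [Real.norm_eq_abs, Real.norm_eq_abs, abs_mul, abs_mul, abs_pow, abs_pow]
  rw [← mul_le_mul_iff_of_pos_right hm1, pow_succ]
  calc |genBinom ν (m+1)| * (|t|^m * |t|) * ((m:ℝ)+1)
      = (|genBinom ν m| * |ν - m|) * (|t|^m * |t|) := by rw [← key]; ring
    _ = (|ν - m| * |t|) * (|genBinom ν m| * |t|^m) := by ring
    _ ≤ ((1+|t|)/2 * ((m:ℝ))) * (|genBinom ν m| * |t|^m) := by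
        apply mul_le_mul_of_nonneg_right harith (by positivity)
    _ ≤ (1+|t|)/2 * (|genBinom ν m| * |t|^m) * ((m:ℝ)+1) := by
        nlinarith [abs_nonneg (genBinom ν m), pow_nonneg h0 m, Nat.cast_nonneg (α := ℝ) m,
          mul_nonneg (abs_nonneg (genBinom ν m)) (pow_nonneg h0 m)]

lemma summable_deriv_bound (ν r : ℝ) (h0 : 0 ≤ r) (h1 : r < 1) :
    Summable (fun m : ℕ => |genBinom ν m| * ((m : ℝ) * r ^ (m - 1))) := by
  obtain ⟨N, hN⟩ := arith ν r h0 h1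
  refine summable_of_ratio_norm_eventually_le (r := (1 + r) / 2) (by linarith) ?_
  filter_upwards [Filter.eventually_ge_atTop (max N 1)] with m hm
  have hmN : N ≤ m := le_trans (le_max_left _ _) hm
  have hm1 : 1 ≤ m := le_trans (le_max_right _ _) hm
  have key := abs_genBinom_rec ν m
  have harith := hN m hmN
  have hpow : r ^ m = r ^ (m - 1) * r := by
    conv_lhs => rw [show m = (m-1) + 1 from (Nat.succ_pred_eq_of_pos hm1).symm]
    rw [pow_succ]
  have hb : (0:ℝ) ≤ |genBinom ν m| * ((m:ℝ) * r ^ (m-1)) := by positivity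
  have hb1 : (0:ℝ) ≤ |genBinom ν (m+1)| * (((m+1:ℕ):ℝ) * r ^ ((m+1)-1)) := by positivity
  rw [Real.norm_eq_abs, Real.norm_eq_abs, abs_of_nonneg hb, abs_of_nonneg hb1]
  have e1 : ((m+1:ℕ):ℝ) = (m:ℝ) + 1 := by push_cast; ring
  have e2 : (m+1) - 1 = m := rfl
  rw [e1, e2]
  calc |genBinom ν (m+1)| * (((m:ℝ)+1) * r ^ m)
      = (|genBinom ν (m+1)| * ((m:ℝ)+1)) * r ^ m := by ring
    _ = (|genBinom ν m| * |ν - m|) * (r ^ (m-1) * r) := by rw [key, hpow]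
    _ = (|ν - m| * r) * (|genBinom ν m| * r ^ (m-1)) := by ring
    _ ≤ ((1+r)/2 * (m:ℝ)) * (|genBinom ν m| * r ^ (m-1)) := by
        apply mul_le_mul_of_nonneg_right harith (by positivity)
    _ = (1+r)/2 * (|genBinom ν m| * ((m:ℝ) * r ^ (m-1))) := by ring

def binomSum (ν t : ℝ) : ℝ := ∑' m : ℕ, genBinom ν m * t ^ m

lemma deriv_norm_bound (ν r : ℝ) {y : ℝ} (hy : |y| ≤ r) (m : ℕ) :
    ‖genBinom ν m * ((m : ℝ) * y ^ (m - 1))‖ ≤ |genBinom ν m| * ((m : ℝ) * r ^ (m - 1)) := by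
  have h0 : (0:ℝ) ≤ r := le_trans (abs_nonneg y) hy
  rw [Real.norm_eq_abs, abs_mul, abs_mul, Nat.abs_cast, abs_pow]
  gcongr

lemma hasDerivAt_binomSum (ν : ℝ) {t : ℝ} (ht : |t| < 1) :
    HasDerivAt (binomSum ν) (∑' m : ℕ, genBinom ν m * ((m : ℝ) * t ^ (m - 1))) t := by
  set r := (1 + |t|) / 2 with hr
  have h0 : (0:ℝ) ≤ r := by positivity
  have h1 : r < 1 := by rw [hr]; linarith
  have htr : t ∈ Ioo (-r) r := by
    constructor <;> [nlinarith [neg_abs_le t]; nlinarith [le_abs_self t]]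
  exact hasDerivAt_tsum_of_isPreconnected (summable_deriv_bound ν r h0 h1)
    isOpen_Ioo (convex_Ioo _ _).isPreconnected
    (fun m y _ => (hasDerivAt_pow m y).const_mul (genBinom ν m))
    (fun m y hy => deriv_norm_bound ν r (abs_le.mpr ⟨hy.1.le, hy.2.le⟩) m)
    htr (summable_term ν t ht) htr

lemma summable_deriv (ν : ℝ) {t : ℝ} (ht : |t| < 1) :
    Summable (fun m : ℕ => genBinom ν m * ((m : ℝ) * t ^ (m - 1))) :=
  Summable.of_norm_bounded (summable_deriv_bound ν |t| (abs_nonneg t) ht)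
    (fun m => deriv_norm_bound ν |t| le_rfl m)

lemma ode (ν : ℝ) {t : ℝ} (ht : |t| < 1) :
    (∑' m : ℕ, genBinom ν m * ((m : ℝ) * t ^ (m - 1))) * (1 + t) = ν * binomSum ν t := by
  set S := ∑' m : ℕ, genBinom ν m * ((m : ℝ) * t ^ (m - 1)) with hS
  have hsum1 : HasSum (fun m => genBinom ν m * t ^ m) (binomSum ν t) :=
    (summable_term ν t ht).hasSum
  have hsumd : HasSum (fun m : ℕ => genBinom ν m * ((m : ℝ) * t ^ (m - 1))) S :=
    (summable_deriv ν ht).hasSum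
  have h3 : HasSum (fun m : ℕ => genBinom ν (m + 1) * ((m : ℝ) + 1) * t ^ m) S := by
    have := (hasSum_nat_add_iff' (f := fun m : ℕ => genBinom ν m * ((m : ℝ) * t ^ (m - 1))) 1).mpr
      hsumd
    simp only [Finset.range_one, Finset.sum_singleton, Nat.cast_zero, zero_mul, mul_zero,
      sub_zero] at this
    convert this using 2 with m
    case e'_3 => rfl
    push_cast [Nat.add_sub_cancel]
    ring
  have h4 : HasSum (fun m : ℕ => genBinom ν m * (m : ℝ) * t ^ m) (S * t) := by
    have h4a := h3.mul_right t
    have h4b : HasSum (fun m : ℕ => (fun k : ℕ => genBinom ν k * (k : ℝ) * t ^ k) (m + 1))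
        (S * t) := by
      convert h4a using 2 with m
      case e'_3 => rfl
      push_cast
      ring
    have := (hasSum_nat_add_iff (f := fun k : ℕ => genBinom ν k * (k : ℝ) * t ^ k) 1).mp h4b
    simpa using this
  have h5 := h3.add h4
  have h6 : HasSum (fun m : ℕ => ν * (genBinom ν m * t ^ m)) (ν * binomSum ν t) :=
    hsum1.mul_left ν
  have heq : (fun m : ℕ => genBinom ν (m + 1) * ((m : ℝ) + 1) * t ^ m
      + genBinom ν m * (m : ℝ) * t ^ m) = fun m : ℕ => ν * (genBinom ν m * t ^ m) := by
    funext m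
    rw [genBinom_rec ν m]
    ring
  rw [heq] at h5
  have := h5.unique h6
  linarith [this]

lemma binomSum_eq (ν : ℝ) {t : ℝ} (ht : |t| < 1) : binomSum ν t = (1 + t) ^ ν := by
  have key : ∀ s : ℝ, |s| < 1 → HasDerivAt (fun z => binomSum ν z * (1 + z) ^ (-ν)) 0 s := by
    intro s hs
    have hpos : 0 < 1 + s := by nlinarith [neg_abs_le s]
    have hd2 : HasDerivAt (fun z : ℝ => (1 + z) ^ (-ν)) (1 * (-ν) * (1 + s) ^ (-ν - 1)) s :=
      HasDerivAt.rpow_const ((hasDerivAt_id s).const_add 1) (Or.inl hpos.ne')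
    have hd := (hasDerivAt_binomSum ν hs).mul hd2
    have e : (1 + s) ^ (-ν) = (1 + s) * (1 + s) ^ (-ν - 1) := by
      have h := Real.rpow_add hpos 1 (-ν - 1)
      rw [Real.rpow_one] at h
      rw [show (1:ℝ) + (-ν - 1) = -ν by ring] at h
      exact h
    convert hd using 1
    case e'_4 => rfl
    case e'_5 => rfl
    case e'_8 => rfl
    rw [e]
    have hode := ode ν hs
    linear_combination (-(1 + s) ^ (-ν - 1)) * hode
  have hconst : binomSum ν t * (1 + t) ^ (-ν) = binomSum ν 0 * (1 + 0 : ℝ) ^ (-ν) := by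
    rcases le_or_gt 0 t with h | h
    · have := constant_of_has_deriv_right_zero (f := fun z => binomSum ν z * (1 + z) ^ (-ν))
        (a := 0) (b := t)
        (fun x hx => ((key x (by rw [abs_lt]; constructor <;> [linarith [hx.1]; linarith [hx.2, ht, le_abs_self t]])).continuousAt).continuousWithinAt)
        (fun x hx => ((key x (by rw [abs_lt]; constructor <;> [linarith [hx.1]; linarith [hx.2, ht, le_abs_self t]])).hasDerivWithinAt))
        t (by constructor <;> [exact h; exact le_rfl])
      simpa using this
    · have := constant_of_has_deriv_right_zero (f := fun z => binomSum ν z * (1 + z) ^ (-ν))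
        (a := t) (b := 0)
        (fun x hx => ((key x (by rw [abs_lt]; constructor <;> [linarith [hx.1, ht, neg_abs_le t]; linarith [hx.2]])).continuousAt).continuousWithinAt)
        (fun x hx => ((key x (by rw [abs_lt]; constructor <;> [linarith [hx.1, ht, neg_abs_le t]; linarith [hx.2]])).hasDerivWithinAt))
        0 (by constructor <;> [exact h.le; exact le_rfl])
      simpa using this.symm
  have h00 : binomSum ν 0 = 1 := by
    rw [binomSum, tsum_eq_single 0 (fun m hm => by simp [zero_pow hm])]
    simp [genBinom_zero]
  rw [h00, one_mul] at hconst
  have hpos : 0 < 1 + t := by nlinarith [neg_abs_le t]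
  simp only [add_zero, Real.one_rpow] at hconst
  have hne : (1 + t) ^ (-ν) ≠ 0 := (Real.rpow_pos_of_pos hpos _).ne'
  have hX : (1 + t) ^ ν * (1 + t) ^ (-ν) = 1 := by
    rw [← Real.rpow_add hpos]; norm_num
  exact mul_right_cancel₀ hne (hconst.trans hX.symm)

theorem hasSum_binomial (ν : ℝ) {t : ℝ} (ht : |t| < 1) :
    HasSum (fun m : ℕ => genBinom ν m * t ^ m) ((1 + t) ^ ν) := by
  have := (summable_term ν t ht).hasSum
  rwa [show (∑' m : ℕ, genBinom ν m * t ^ m) = (1 + t) ^ ν from binomSum_eq ν ht] at this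

lemma summable_abs_genBinom (ν : ℝ) (hν : 0 < ν) : Summable (fun m : ℕ => |genBinom ν m|) := by
  set M : ℕ := ⌈ν⌉₊ with hM
  have hνM : ν ≤ (M : ℝ) := Nat.le_ceil ν
  rw [← summable_nat_add_iff M]
  set c : ℕ → ℝ := fun k => ((M + k : ℕ) : ℝ) * |genBinom ν (M + k)| with hc
  have hkey : ∀ k : ℕ, ν * |genBinom ν (M + k)| = c k - c (k + 1) := by
    intro k
    have h1 := abs_genBinom_rec ν (M + k)
    have h2 : |ν - ((M + k : ℕ) : ℝ)| = ((M + k : ℕ) : ℝ) - ν := by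
      rw [abs_sub_comm, abs_of_nonneg]
      push_cast
      push_cast at hνM
      linarith [Nat.cast_nonneg (α := ℝ) k]
    rw [h2] at h1
    show ν * |genBinom ν (M + k)| = ((M + k : ℕ) : ℝ) * |genBinom ν (M + k)|
      - ((M + (k + 1) : ℕ) : ℝ) * |genBinom ν (M + (k + 1))|
    have e1 : M + (k + 1) = (M + k) + 1 := by omega
    rw [e1]
    push_cast at h1 ⊢
    linear_combination h1
  have hsumle : ∀ K : ℕ, ∑ k ∈ Finset.range K, |genBinom ν (M + k)| ≤ c 0 / ν := by
    intro K
    have htel : ∑ k ∈ Finset.range K, (c k - c (k + 1)) = c 0 - c K := by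
      rw [Finset.sum_range_sub' c K]
    have : ν * ∑ k ∈ Finset.range K, |genBinom ν (M + k)| = c 0 - c K := by
      rw [Finset.mul_sum]
      rw [← htel]
      exact Finset.sum_congr rfl (fun k _ => hkey k)
    have hcK : 0 ≤ c K := by positivity
    rw [le_div_iff₀ hν]
    linarith
  have := summable_of_sum_range_le (c := c 0 / ν)
    (fun n => abs_nonneg (genBinom ν (M + n))) hsumle
  convert this using 2 with k
  case e'_3 => rfl
  ring_nf

lemma hasSum_binomial' (ν : ℝ) (hν : 0 < ν) {t : ℝ} (ht : |t| ≤ 1) :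
    HasSum (fun m : ℕ => genBinom ν m * t ^ m) ((1 + t) ^ ν) := by
  rcases lt_or_eq_of_le ht with h | h
  · exact hasSum_binomial ν h
  -- |t| = 1
  have habs := summable_abs_genBinom ν hν
  have hbound : ∀ (s : ℝ), |s| ≤ 1 → ∀ m : ℕ, ‖genBinom ν m * s ^ m‖ ≤ |genBinom ν m| := by
    intro s hs m
    rw [Real.norm_eq_abs, abs_mul, abs_pow]
    calc |genBinom ν m| * |s| ^ m ≤ |genBinom ν m| * 1 ^ m := by gcongr
      _ = |genBinom ν m| := by simp
  have hsummable : Summable (fun m : ℕ => genBinom ν m * t ^ m) :=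
    Summable.of_norm_bounded habs (hbound t ht)
  -- continuity of g on Icc (-1) 1
  set g : ℝ → ℝ := fun s => ∑' m : ℕ, genBinom ν m * s ^ m with hg
  have hcont : ContinuousOn g (Icc (-1 : ℝ) 1) := by
    rw [continuousOn_iff_continuous_restrict]
    have : (Icc (-1:ℝ) 1).domRestrict g
        = fun x : Icc (-1:ℝ) 1 => ∑' m : ℕ, genBinom ν m * (x : ℝ) ^ m := rfl
    rw [this]
    refine continuous_tsum (fun m => ?_) habs (fun m x => ?_)
    · exact continuous_const.mul (continuous_subtype_val.pow m)
    · exact hbound x (abs_le.mpr ⟨x.2.1, x.2.2⟩) m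
  have hrcont : ContinuousOn (fun s : ℝ => (1 + s) ^ ν) (Icc (-1 : ℝ) 1) := by
    intro x hx
    refine ContinuousAt.continuousWithinAt ?_
    exact (Real.continuousAt_rpow_const (1 + x) ν (Or.inr hν.le)).comp
      ((continuous_const.add continuous_id).continuousAt)
  have heqOn : EqOn g (fun s : ℝ => (1 + s) ^ ν) (Ioo (-1 : ℝ) 1) := by
    intro s hs
    exact (hasSum_binomial ν (abs_lt.mpr ⟨hs.1, hs.2⟩)).tsum_eq
  -- endpoints
  have hend : ∀ s : ℝ, s ∈ Icc (-1:ℝ) 1 → g s = (1 + s) ^ ν := by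
    intro s hs
    rcases lt_or_ge (|s|) 1 with h' | h'
    · exact heqOn ⟨(abs_lt.mp h').1, (abs_lt.mp h').2⟩
    · have hclo : s ∈ closure (Ioo (-1:ℝ) 1) := by
        rw [closure_Ioo (by norm_num : (-1:ℝ) ≠ 1)]
        exact hs
      have hnb : (𝓝[Ioo (-1:ℝ) 1] s).NeBot := mem_closure_iff_nhdsWithin_neBot.mp hclo
      have h1 : Tendsto g (𝓝[Ioo (-1:ℝ) 1] s) (𝓝 (g s)) :=
        ((hcont s hs).mono Ioo_subset_Icc_self)
      have h2 : Tendsto (fun z : ℝ => (1 + z) ^ ν) (𝓝[Ioo (-1:ℝ) 1] s)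
          (𝓝 ((1 + s) ^ ν)) := ((hrcont s hs).mono Ioo_subset_Icc_self)
      have h1' : Tendsto (fun z : ℝ => (1 + z) ^ ν) (𝓝[Ioo (-1:ℝ) 1] s) (𝓝 (g s)) := by
        refine h1.congr' ?_
        filter_upwards [self_mem_nhdsWithin] with z hz
        exact heqOn hz
      exact tendsto_nhds_unique h1' h2
  have := hsummable.hasSum
  rwa [show (∑' m : ℕ, genBinom ν m * t ^ m) = (1 + t) ^ ν from
    hend t (abs_le.mp ht)] at this

def Salt (N m : ℕ) (x : ℝ) : ℝ :=
  ∑ k ∈ Finset.range (N + 1), (-1 : ℝ) ^ k * (N.choose k : ℝ) * (x + k) ^ m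

lemma pascal (N m : ℕ) (x : ℝ) : Salt (N + 1) m x = Salt N m x - Salt N m (x + 1) := by
  have hA : Salt (N + 1) m x
      = (∑ k ∈ Finset.range (N + 1),
          (-1 : ℝ) ^ (k + 1) * (((N + 1).choose (k + 1) : ℕ) : ℝ) * (x + ((k : ℝ) + 1)) ^ m)
        + x ^ m := by
    rw [Salt, Finset.sum_range_succ'
      (fun k => (-1 : ℝ) ^ k * (((N + 1).choose k : ℕ) : ℝ) * (x + k) ^ m) (N + 1)]
    norm_num
  have hB : Salt N m x
      = (∑ k ∈ Finset.range N,
          (-1 : ℝ) ^ (k + 1) * ((N.choose (k + 1) : ℕ) : ℝ) * (x + ((k : ℝ) + 1)) ^ m)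
        + x ^ m := by
    rw [Salt, Finset.sum_range_succ'
      (fun k => (-1 : ℝ) ^ k * ((N.choose k : ℕ) : ℝ) * (x + k) ^ m) N]
    norm_num
  have hPascal : ∀ k : ℕ, (((N + 1).choose (k + 1) : ℕ) : ℝ)
      = ((N.choose k : ℕ) : ℝ) + ((N.choose (k + 1) : ℕ) : ℝ) := by
    intro k
    rw [Nat.choose_succ_succ]
    push_cast
    ring
  have hsplit : ∑ k ∈ Finset.range (N + 1),
      (-1 : ℝ) ^ (k + 1) * (((N + 1).choose (k + 1) : ℕ) : ℝ) * (x + ((k : ℝ) + 1)) ^ m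
      = (∑ k ∈ Finset.range (N + 1),
          (-1 : ℝ) ^ (k + 1) * ((N.choose k : ℕ) : ℝ) * (x + ((k : ℝ) + 1)) ^ m)
        + ∑ k ∈ Finset.range (N + 1),
          (-1 : ℝ) ^ (k + 1) * ((N.choose (k + 1) : ℕ) : ℝ) * (x + ((k : ℝ) + 1)) ^ m := by
    rw [← Finset.sum_add_distrib]
    exact Finset.sum_congr rfl fun k _ => by rw [hPascal k]; ring
  have hT1 : ∑ k ∈ Finset.range (N + 1),
      (-1 : ℝ) ^ (k + 1) * ((N.choose k : ℕ) : ℝ) * (x + ((k : ℝ) + 1)) ^ m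
      = - Salt N m (x + 1) := by
    rw [Salt, ← Finset.sum_neg_distrib]
    exact Finset.sum_congr rfl fun k _ => by ring_nf
  have hT2 : ∑ k ∈ Finset.range (N + 1),
      (-1 : ℝ) ^ (k + 1) * ((N.choose (k + 1) : ℕ) : ℝ) * (x + ((k : ℝ) + 1)) ^ m
      = ∑ k ∈ Finset.range N,
          (-1 : ℝ) ^ (k + 1) * ((N.choose (k + 1) : ℕ) : ℝ) * (x + ((k : ℝ) + 1)) ^ m := by
    rw [Finset.sum_range_succ, Nat.choose_succ_self]
    norm_num
  rw [hA, hsplit, hT1, hT2, hB]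
  ring

lemma salt_const (N : ℕ) (hP : ∀ i, i < N → ∀ y : ℝ, Salt N i y = 0) (x : ℝ) :
    Salt N N x = Salt N N 0 := by
  have hexp : ∀ k : ℕ, (x + (k : ℝ)) ^ N
      = ∑ i ∈ Finset.range (N + 1), (k : ℝ) ^ i * x ^ (N - i) * (N.choose i : ℝ) := by
    intro k
    rw [show x + (k : ℝ) = (k : ℝ) + x by ring, add_pow]
  calc Salt N N x
      = ∑ k ∈ Finset.range (N+1), ∑ i ∈ Finset.range (N+1),
          ((-1:ℝ)^k * (N.choose k : ℝ)) * ((k:ℝ)^i * x^(N-i) * (N.choose i : ℝ)) := by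
        rw [Salt]
        exact Finset.sum_congr rfl fun k _ => by rw [hexp k, Finset.mul_sum]
    _ = ∑ i ∈ Finset.range (N+1), ∑ k ∈ Finset.range (N+1),
          ((-1:ℝ)^k * (N.choose k : ℝ)) * ((k:ℝ)^i * x^(N-i) * (N.choose i : ℝ)) :=
        Finset.sum_comm
    _ = ∑ i ∈ Finset.range (N+1), Salt N i 0 * (x^(N-i) * (N.choose i : ℝ)) := by
        refine Finset.sum_congr rfl fun i _ => ?_
        rw [Salt, Finset.sum_mul]
        exact Finset.sum_congr rfl fun k _ => by rw [zero_add]; ring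
    _ = Salt N N 0 := by
        rw [Finset.sum_range_succ]
        have hz : ∑ i ∈ Finset.range N, Salt N i 0 * (x^(N-i) * (N.choose i : ℝ)) = 0 :=
          Finset.sum_eq_zero fun i hi => by
            rw [hP i (Finset.mem_range.mp hi) 0, zero_mul]
        rw [hz, zero_add, Nat.sub_self, pow_zero, Nat.choose_self]
        norm_num

lemma salt_vanish : ∀ N m : ℕ, m < N → ∀ x : ℝ, Salt N m x = 0 := by
  intro N
  induction N with
  | zero => intro m hm; omega
  | succ N ih =>
    intro m hm x
    rw [pascal]
    rcases lt_or_eq_of_le (Nat.lt_succ_iff.mp hm) with h | h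
    · rw [ih m h, ih m h]; ring
    · subst h
      rw [salt_const m (fun i hi y => ih i hi y) x,
        salt_const m (fun i hi y => ih i hi y) (x + 1)]
      ring

lemma reindex (l m : ℕ) :
    ∑ j ∈ Finset.Icc (-(l : ℤ)) (l : ℤ),
      (((2 * l).choose ((l : ℤ) + j).toNat : ℕ) : ℝ) * (-1 : ℝ) ^ j * ((j : ℝ)) ^ m
    = (-1 : ℝ) ^ l * Salt (2 * l) m (-(l : ℝ)) := by
  rw [Salt, Finset.mul_sum]
  refine Finset.sum_nbij' (i := fun (j : ℤ) => ((j + l).toNat)) (j := fun (k : ℕ) => (k : ℤ) - l)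
    ?_ ?_ ?_ ?_ ?_
  · intro j hj
    rw [Finset.mem_Icc] at hj
    rw [Finset.mem_range]
    omega
  · intro k hk
    rw [Finset.mem_range] at hk
    rw [Finset.mem_Icc]
    omega
  · intro j hj
    rw [Finset.mem_Icc] at hj
    omega
  · intro k _
    omega
  · intro j hj
    rw [Finset.mem_Icc] at hj
    have hk : (((j + l).toNat : ℕ) : ℤ) = j + l := by omega
    have h1 : ((l : ℤ) + j).toNat = (j + l).toNat := by omega
    have hkR : (((j + l).toNat : ℕ) : ℝ) = (j : ℝ) + (l : ℝ) := by
      exact_mod_cast congrArg (Int.cast : ℤ → ℝ) hk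
    have hsign : (-1 : ℝ) ^ ((j + l).toNat) = (-1 : ℝ) ^ j * (-1 : ℝ) ^ l := by
      rw [← zpow_natCast (-1 : ℝ) ((j + l).toNat), hk,
        zpow_add₀ (by norm_num : (-1:ℝ) ≠ 0), zpow_natCast]
    have hsq : (-1 : ℝ) ^ l * (-1 : ℝ) ^ l = 1 := by
      rw [← pow_add]; exact Even.neg_one_pow ⟨l, rfl⟩
    have hbase : (-(l : ℝ) + (((j + l).toNat : ℕ) : ℝ)) = (j : ℝ) := by rw [hkR]; ring
    rw [h1, hsign, hbase]
    linear_combination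
      (-((-1 : ℝ) ^ j * (((2 * l).choose ((j + l).toNat) : ℕ) : ℝ) * ((j : ℝ)) ^ m)) * hsq

lemma Xcoef_vanish (l m : ℕ) (hm : m < 2 * l) : Xcoef l m = 0 := by
  rcases Nat.eq_zero_or_pos m with h | h
  · rw [Xcoef, if_pos h]
  · rw [Xcoef, if_neg h.ne', reindex, salt_vanish (2 * l) m hm, mul_zero]

lemma sum_eq_Xcoef (l : ℕ) (hl : 1 ≤ l) (m : ℕ) :
    ∑ j ∈ Finset.Icc (-(l : ℤ)) (l : ℤ),
      (((2 * l).choose ((l : ℤ) + j).toNat : ℕ) : ℝ) * (-1 : ℝ) ^ j * ((j : ℝ)) ^ m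
    = Xcoef l m := by
  rcases Nat.eq_zero_or_pos m with h | h
  · subst h
    rw [Xcoef, if_pos rfl, reindex, salt_vanish (2 * l) 0 (by omega), mul_zero]
  · rw [Xcoef, if_neg h.ne']

lemma hasSum_xj (ν x : ℝ) (hx : 0 < x) (j : ℤ)
    (h : |(j : ℝ) / x| < 1 ∨ (0 < ν ∧ |(j : ℝ) / x| ≤ 1)) :
    HasSum (fun m : ℕ => genBinom ν m * ((j : ℝ)) ^ m * x ^ (ν - (m : ℝ)))
      ((x + (j : ℝ)) ^ ν) := by
  set t := (j : ℝ) / x with hht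
  have htle : |t| ≤ 1 := by rcases h with h | h; exacts [h.le, h.2]
  have hjx : |(j : ℝ)| ≤ x := by
    rw [abs_div, abs_of_pos hx, div_le_one hx] at htle
    exact htle
  have hxj : 0 ≤ x + (j : ℝ) := by
    have := neg_abs_le ((j : ℝ))
    linarith
  have hB : HasSum (fun m : ℕ => genBinom ν m * t ^ m) ((1 + t) ^ ν) := by
    rcases h with h | h
    · exact hasSum_binomial ν h
    · exact hasSum_binomial' ν h.1 h.2
  have hB2 := hB.mul_right (x ^ ν)
  have hval : (1 + t) ^ ν * x ^ ν = (x + (j : ℝ)) ^ ν := by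
    have h1 : 1 + t = (x + (j : ℝ)) / x := by
      rw [hht]; field_simp
    rw [h1, Real.div_rpow hxj hx.le, div_mul_cancel₀ _ (Real.rpow_pos_of_pos hx ν).ne']
  have hfun : ∀ m : ℕ, genBinom ν m * t ^ m * x ^ ν
      = genBinom ν m * ((j : ℝ)) ^ m * x ^ (ν - (m : ℝ)) := by
    intro m
    have hxm : (0:ℝ) < x ^ m := pow_pos hx m
    rw [Real.rpow_sub hx, Real.rpow_natCast, hht, div_pow]
    field_simp
  rw [hval] at hB2
  exact HasSum.congr_fun hB2 (fun m => (hfun m).symm)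

lemma key (l : ℕ) (hl : 1 ≤ l) (ν x : ℝ) (hx : (l : ℝ) ≤ x)
    (hcase : (l : ℝ) < x ∨ 0 < ν) :
    HasSum (fun m : ℕ =>
        genBinom ν (m + 2 * l) * Xcoef l (m + 2 * l) * x ^ (ν - ((m + 2 * l : ℕ) : ℝ)))
      (∑ j ∈ Finset.Icc (-(l : ℤ)) (l : ℤ),
        (((2 * l).choose ((l : ℤ) + j).toNat : ℕ) : ℝ) * (-1 : ℝ) ^ j * (x + (j : ℝ)) ^ ν) := by
  have hl' : (1 : ℝ) ≤ (l : ℝ) := by exact_mod_cast hl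
  have hx0 : 0 < x := lt_of_lt_of_le (by linarith) hx
  have hjabs : ∀ j ∈ Finset.Icc (-(l : ℤ)) (l : ℤ), |(j : ℝ)| ≤ (l : ℝ) := by
    intro j hj
    rw [Finset.mem_Icc] at hj
    rw [abs_le]
    constructor <;> [exact_mod_cast hj.1; exact_mod_cast hj.2]
  have hs : HasSum (fun m : ℕ => ∑ j ∈ Finset.Icc (-(l : ℤ)) (l : ℤ),
      (((2 * l).choose ((l : ℤ) + j).toNat : ℕ) : ℝ) * (-1 : ℝ) ^ j *
        (genBinom ν m * ((j : ℝ)) ^ m * x ^ (ν - (m : ℝ))))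
      (∑ j ∈ Finset.Icc (-(l : ℤ)) (l : ℤ),
        (((2 * l).choose ((l : ℤ) + j).toNat : ℕ) : ℝ) * (-1 : ℝ) ^ j * (x + (j : ℝ)) ^ ν) := by
    refine hasSum_sum (fun j hj => ?_)
    have habs := hjabs j hj
    have hcond : |(j : ℝ) / x| < 1 ∨ (0 < ν ∧ |(j : ℝ) / x| ≤ 1) := by
      rcases hcase with h | h
      · left
        rw [abs_div, abs_of_pos hx0, div_lt_one hx0]
        linarith
      · right
        refine ⟨h, ?_⟩
        rw [abs_div, abs_of_pos hx0, div_le_one hx0]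
        linarith
    have hmul := (hasSum_xj ν x hx0 j hcond).mul_left
      ((((2 * l).choose ((l : ℤ) + j).toNat : ℕ) : ℝ) * (-1 : ℝ) ^ j)
    exact HasSum.congr_fun hmul (fun m => by ring)
  have hfun : ∀ m : ℕ, (∑ j ∈ Finset.Icc (-(l : ℤ)) (l : ℤ),
      (((2 * l).choose ((l : ℤ) + j).toNat : ℕ) : ℝ) * (-1 : ℝ) ^ j *
        (genBinom ν m * ((j : ℝ)) ^ m * x ^ (ν - (m : ℝ))))
      = genBinom ν m * Xcoef l m * x ^ (ν - (m : ℝ)) := by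
    intro m
    calc ∑ j ∈ Finset.Icc (-(l : ℤ)) (l : ℤ),
        (((2 * l).choose ((l : ℤ) + j).toNat : ℕ) : ℝ) * (-1 : ℝ) ^ j *
          (genBinom ν m * ((j : ℝ)) ^ m * x ^ (ν - (m : ℝ)))
        = ∑ j ∈ Finset.Icc (-(l : ℤ)) (l : ℤ),
          ((((2 * l).choose ((l : ℤ) + j).toNat : ℕ) : ℝ) * (-1 : ℝ) ^ j * ((j : ℝ)) ^ m) *
            (genBinom ν m * x ^ (ν - (m : ℝ))) :=
        Finset.sum_congr rfl (fun j _ => by ring)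
      _ = (∑ j ∈ Finset.Icc (-(l : ℤ)) (l : ℤ),
          (((2 * l).choose ((l : ℤ) + j).toNat : ℕ) : ℝ) * (-1 : ℝ) ^ j * ((j : ℝ)) ^ m) *
            (genBinom ν m * x ^ (ν - (m : ℝ))) := (Finset.sum_mul _ _ _).symm
      _ = Xcoef l m * (genBinom ν m * x ^ (ν - (m : ℝ))) := by rw [sum_eq_Xcoef l hl m]
      _ = genBinom ν m * Xcoef l m * x ^ (ν - (m : ℝ)) := by ring
  have hs2 : HasSum (fun m : ℕ => genBinom ν m * Xcoef l m * x ^ (ν - (m : ℝ)))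
      (∑ j ∈ Finset.Icc (-(l : ℤ)) (l : ℤ),
        (((2 * l).choose ((l : ℤ) + j).toNat : ℕ) : ℝ) * (-1 : ℝ) ^ j * (x + (j : ℝ)) ^ ν) :=
    HasSum.congr_fun hs (fun m => (hfun m).symm)
  rw [hasSum_nat_add_iff (f := fun m : ℕ => genBinom ν m * Xcoef l m * x ^ (ν - (m : ℝ)))
    (2 * l)]
  have hzero : ∑ i ∈ Finset.range (2 * l),
      genBinom ν i * Xcoef l i * x ^ (ν - (i : ℝ)) = 0 :=
    Finset.sum_eq_zero (fun i hi => by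
      rw [Xcoef_vanish l i (Finset.mem_range.mp hi), mul_zero, zero_mul])
  rw [hzero, add_zero]
  exact hs2

end Statement16Aux

/-- the expansion `(-Δ)^ℓ n^ν = Σ_{m=2ℓ}^∞ C(ν,m) X_m^{(ℓ)} n^{ν-m}`:
convergence and the identity for `n > ℓ`, and also for `n = ℓ` when `ν > 0`. -/
theorem statement16 (l : ℕ) (hl : 1 ≤ l) (ν : ℝ) :
    (∀ n : ℤ, (l : ℤ) < n →
      Summable (fun m : ℕ =>
        genBinom ν (m + 2 * l) * Xcoef l (m + 2 * l) * (n : ℝ) ^ (ν - ((m + 2 * l : ℕ) : ℝ))) ∧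
      (∑' m : ℕ,
        genBinom ν (m + 2 * l) * Xcoef l (m + 2 * l) * (n : ℝ) ^ (ν - ((m + 2 * l : ℕ) : ℝ))) =
        ∑ j ∈ Finset.Icc (-(l : ℤ)) (l : ℤ),
          (((2 * l).choose ((l : ℤ) + j).toNat : ℕ) : ℝ) * (-1 : ℝ) ^ j *
            ((n + j : ℤ) : ℝ) ^ ν) ∧
    (0 < ν →
      Summable (fun m : ℕ =>
        genBinom ν (m + 2 * l) * Xcoef l (m + 2 * l) * (l : ℝ) ^ (ν - ((m + 2 * l : ℕ) : ℝ))) ∧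
      (∑' m : ℕ,
        genBinom ν (m + 2 * l) * Xcoef l (m + 2 * l) * (l : ℝ) ^ (ν - ((m + 2 * l : ℕ) : ℝ))) =
        ∑ j ∈ Finset.Icc (-(l : ℤ)) (l : ℤ),
          (((2 * l).choose ((l : ℤ) + j).toNat : ℕ) : ℝ) * (-1 : ℝ) ^ j *
            (((l : ℤ) + j : ℤ) : ℝ) ^ ν) := by
  constructor
  · intro n hn
    have hx : ((l : ℕ) : ℝ) < (n : ℝ) := by exact_mod_cast hn
    have h := key l hl ν (n : ℝ) hx.le (Or.inl hx)
    have hval : (∑ j ∈ Finset.Icc (-(l : ℤ)) (l : ℤ),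
        (((2 * l).choose ((l : ℤ) + j).toNat : ℕ) : ℝ) * (-1 : ℝ) ^ j *
          ((n : ℝ) + (j : ℝ)) ^ ν)
        = ∑ j ∈ Finset.Icc (-(l : ℤ)) (l : ℤ),
        (((2 * l).choose ((l : ℤ) + j).toNat : ℕ) : ℝ) * (-1 : ℝ) ^ j *
          ((n + j : ℤ) : ℝ) ^ ν :=
      Finset.sum_congr rfl (fun j _ => by push_cast; ring_nf)
    rw [hval] at h
    exact ⟨h.summable, h.tsum_eq⟩
  · intro hν
    have h := key l hl ν ((l : ℕ) : ℝ) le_rfl (Or.inr hν)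
    have hval : (∑ j ∈ Finset.Icc (-(l : ℤ)) (l : ℤ),
        (((2 * l).choose ((l : ℤ) + j).toNat : ℕ) : ℝ) * (-1 : ℝ) ^ j *
          (((l : ℕ) : ℝ) + (j : ℝ)) ^ ν)
        = ∑ j ∈ Finset.Icc (-(l : ℤ)) (l : ℤ),
        (((2 * l).choose ((l : ℤ) + j).toNat : ℕ) : ℝ) * (-1 : ℝ) ^ j *
          (((l : ℤ) + j : ℤ) : ℝ) ^ ν :=
      Finset.sum_congr rfl (fun j _ => by push_cast; ring_nf)
    rw [hval] at h
    exact ⟨h.summable, h.tsum_eq⟩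


end HRB
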